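/- Let G be a finite graph with all degrees even. Then the number of Eulerian orientations of G is at least the number of half-graphs of G (spanning subgraphs H with deg_H(v) = deg_G(v)/2 for all v). -/

import Mathlib

open Finset

/-- `D` is an orientation of the graph `G`: a set of directed edges containing
exactly one direction of each edge of `G`. -/
def IsOrientation {V : Type*} (G : SimpleGraph V) (D : Finset (V × V)) : Prop :=
  (∀ p ∈ D, G.Adj p.1 p.2) ∧ ∀ u v, G.Adj u v → ((u, v) ∈ D ↔ (v, u) ∉ D)

/-- An orientation is Eulerian if at every vertex the out-degree equals the in-degree. -/
def IsEulerianOrientation {V : Type*} [Fintype V] [DecidableEq V] (G : SimpleGraph V)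
    (D : Finset (V × V)) : Prop :=
  IsOrientation G D ∧
    ∀ v : V, (D.filter (fun p => p.1 = v)).card = (D.filter (fun p => p.2 = v)).card

/-- `H` is a half-graph of `G`. -/
def IsHalfGraph {V : Type*} [Fintype V] [DecidableEq V] (G : SimpleGraph V)
    [DecidableRel G.Adj] (H : Finset (Sym2 V)) : Prop :=
  H ⊆ G.edgeFinset ∧ ∀ v : V, (H.filter (fun e => v ∈ e)).card = G.degree v / 2

set_option linter.unusedSectionVars false

namespace Stmt18Aux

/-- generic fiber transport -/
lemma exists_equiv_comm {α β κ : Type*} [Fintype α] [Fintype β] [DecidableEq κ]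
    (c : α → κ) (c' : β → κ)
    (h : ∀ k, Fintype.card {a // c a = k} = Fintype.card {b // c' b = k}) :
    ∃ φ : α ≃ β, ∀ a, c' (φ a) = c a := by
  classical
  refine ⟨((Equiv.sigmaFiberEquiv c).symm.trans
    ((Equiv.sigmaCongrRight fun k => Fintype.equivOfCardEq (h k)).trans
      (Equiv.sigmaFiberEquiv c'))), fun a => ?_⟩
  exact ((Equiv.sigmaCongrRight fun k => Fintype.equivOfCardEq (h k))
    ((Equiv.sigmaFiberEquiv c).symm a)).2.2

variable {V : Type*} [Fintype V] [DecidableEq V] {G : SimpleGraph V} [DecidableRel G.Adj]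

def Pairing (G : SimpleGraph V) [DecidableRel G.Adj] : Type _ :=
  {P : G.Dart → G.Dart // (∀ d, P (P d) = d) ∧ (∀ d, (P d).fst = d.fst) ∧ ∀ d, P d ≠ d}

instance : Finite (Pairing G) := by unfold Pairing; infer_instance

def Compat (μ : G.Dart → Bool) (P : Pairing G) : Prop := ∀ d, μ (P.1 d) = !μ d

/-- the marking is balanced at every vertex -/
def Bal (μ : G.Dart → Bool) : Prop :=
  ∀ v : V, (univ.filter fun d : G.Dart => d.fst = v ∧ μ d).card
    = (univ.filter fun d : G.Dart => d.fst = v ∧ ¬ μ d).card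

lemma bal_fiber {μ μ' : G.Dart → Bool} (hμ : Bal μ) (hμ' : Bal μ') (k : V × Bool) :
    Fintype.card {d : G.Dart // (d.fst, μ d) = k} =
      Fintype.card {d : G.Dart // (d.fst, μ' d) = k} := by
  classical
  obtain ⟨v, b⟩ := k
  have key : ∀ ν : G.Dart → Bool, Bal ν → ∀ b : Bool,
      2 * (univ.filter fun d : G.Dart => d.fst = v ∧ ν d = b).card
        = (univ.filter fun d : G.Dart => d.fst = v).card := by
    intro ν hν b
    have hsplit : (univ.filter fun d : G.Dart => d.fst = v ∧ ν d).card
        + (univ.filter fun d : G.Dart => d.fst = v ∧ ¬ ν d).card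
        = (univ.filter fun d : G.Dart => d.fst = v).card := by
      rw [← Finset.filter_filter, ← Finset.filter_filter]
      exact Finset.card_filter_add_card_filter_not _
    have ht := hν v
    simp only [Bool.not_eq_true] at hsplit ht ⊢
    cases b <;> omega
  have h1 := key μ hμ b
  have h2 := key μ' hμ' b
  have e1 : Fintype.card {d : G.Dart // (d.fst, μ d) = (v, b)}
      = (univ.filter fun d : G.Dart => d.fst = v ∧ μ d = b).card := by
    rw [Fintype.card_subtype]
    congr 1
    apply Finset.filter_congr
    intro d _
    simp [Prod.ext_iff]
  have e2 : Fintype.card {d : G.Dart // (d.fst, μ' d) = (v, b)}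
      = (univ.filter fun d : G.Dart => d.fst = v ∧ μ' d = b).card := by
    rw [Fintype.card_subtype]
    congr 1
    apply Finset.filter_congr
    intro d _
    simp [Prod.ext_iff]
  omega

lemma exists_dart_equiv {μ μ' : G.Dart → Bool} (hμ : Bal μ) (hμ' : Bal μ') :
    ∃ φ : G.Dart ≃ G.Dart, ∀ d, ((φ d).fst = d.fst) ∧ (μ' (φ d) = μ d) := by
  classical
  obtain ⟨φ, hφ⟩ := exists_equiv_comm (fun d : G.Dart => (d.fst, μ d))
    (fun d : G.Dart => (d.fst, μ' d)) (bal_fiber hμ hμ')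
  exact ⟨φ, fun a => by have := hφ a; rw [Prod.ext_iff] at this; exact ⟨this.1, this.2⟩⟩

/-- conjugation of a pairing by a first-coordinate preserving equivalence -/
def conj (φ : G.Dart ≃ G.Dart) (hφ : ∀ d, (φ d).fst = d.fst) (P : Pairing G) : Pairing G := by
  refine ⟨fun d => φ (P.1 (φ.symm d)), fun d => ?_, fun d => ?_, fun d => ?_⟩
  · simp [P.2.1]
  · have h2 : (φ.symm d).fst = d.fst := by
      have := hφ (φ.symm d); simp at this; exact this.symm
    rw [hφ, P.2.2.1, h2]
  · intro h
    apply P.2.2.2 (φ.symm d)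
    apply_fun φ.symm at h
    simpa using h

lemma card_compat_congr {μ μ' : G.Dart → Bool}
    (h : ∃ φ : G.Dart ≃ G.Dart, ∀ d, ((φ d).fst = d.fst) ∧ (μ' (φ d) = μ d)) :
    Nat.card {P : Pairing G // Compat μ P} = Nat.card {P : Pairing G // Compat μ' P} := by
  obtain ⟨φ, hφ⟩ := h
  have hfst : ∀ d, (φ d).fst = d.fst := fun d => (hφ d).1
  have hfst' : ∀ d, (φ.symm d).fst = d.fst := fun d => by
    have := hfst (φ.symm d); simp at this; exact this.symm
  have hμ' : ∀ d, μ' (φ d) = μ d := fun d => (hφ d).2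
  have hμ'' : ∀ d, μ (φ.symm d) = μ' d := fun d => by
    have := hμ' (φ.symm d); simp at this; exact this.symm
  apply Nat.card_congr
  refine ⟨fun q => ⟨conj φ hfst q.1, ?_⟩, fun q => ⟨conj φ.symm hfst' q.1, ?_⟩, ?_, ?_⟩
  · intro d
    show μ' (φ (q.1.1 (φ.symm d))) = !μ' d
    rw [hμ', q.2 (φ.symm d), hμ'']
  · intro d
    show μ (φ.symm (q.1.1 (φ.symm.symm d))) = !μ d
    rw [hμ'']
    simp only [Equiv.symm_symm]
    rw [q.2 (φ d), hμ']
  · intro q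
    apply Subtype.ext; apply Subtype.ext; funext d
    simp [conj]
  · intro q
    apply Subtype.ext; apply Subtype.ext; funext d
    simp [conj]

lemma compat_nonempty {μ : G.Dart → Bool}
    (hψ : ∃ ψ : {d : G.Dart // μ d = true} ≃ {d : G.Dart // μ d = false},
      ∀ a, (ψ a).1.fst = a.1.fst) :
    ∃ P : Pairing G, Compat μ P := by
  classical
  obtain ⟨ψ, hc⟩ := hψ
  have hc' : ∀ a, (ψ.symm a).1.fst = a.1.fst := fun a => by
    have := hc (ψ.symm a); simp at this; rw [this]
  let f : G.Dart → G.Dart := fun d =>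
    if h : μ d = true then (ψ ⟨d, h⟩).1 else (ψ.symm ⟨d, by simpa using h⟩).1
  have hμf : ∀ d, μ (f d) = !μ d := by
    intro d
    by_cases h : μ d = true
    · simp only [f, dif_pos h]
      rw [(ψ ⟨d, h⟩).2, h]; rfl
    · simp only [f, dif_neg h]
      rw [(ψ.symm ⟨d, by simpa using h⟩).2]
      simp only [Bool.not_eq_true] at h; rw [h]; rfl
  have hff : ∀ d, f (f d) = d := by
    intro d
    by_cases h : μ d = true
    · have h2 : ¬ μ (f d) = true := by rw [hμf d, h]; simp
      have h3 : μ (f d) = false := by simpa using h2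
      simp only [f, dif_pos h] at h3 h2 ⊢
      rw [dif_neg h2]
      have he : (⟨(ψ ⟨d, h⟩).1, by simpa using h2⟩ : {d : G.Dart // μ d = false}) = ψ ⟨d, h⟩ :=
        Subtype.ext rfl
      rw [he]
      simp
    · have h2 : μ (f d) = true := by rw [hμf d]; simpa using h
      simp only [f, dif_neg h] at h2 ⊢
      rw [dif_pos h2]
      have he : (⟨(ψ.symm ⟨d, by simpa using h⟩).1, h2⟩ : {d : G.Dart // μ d = true})
          = ψ.symm ⟨d, by simpa using h⟩ := Subtype.ext rfl
      rw [he]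
      simp
  have hfstf : ∀ d, (f d).fst = d.fst := by
    intro d
    by_cases h : μ d = true
    · simp only [f, dif_pos h]; exact hc _
    · simp only [f, dif_neg h]; exact hc' _
  have hne : ∀ d, f d ≠ d := by
    intro d h
    have := hμf d
    rw [h] at this
    simp at this
  exact ⟨⟨f, hff, hfstf, hne⟩, hμf⟩
lemma bal_psi {μ : G.Dart → Bool} (hμ : Bal μ) :
    ∃ ψ : {d : G.Dart // μ d = true} ≃ {d : G.Dart // μ d = false},
      ∀ a, (ψ a).1.fst = a.1.fst := by
  classical
  apply exists_equiv_comm (fun a : {d : G.Dart // μ d = true} => a.1.fst)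
    (fun a : {d : G.Dart // μ d = false} => a.1.fst)
  intro v
  rw [← Nat.card_eq_fintype_card, ← Nat.card_eq_fintype_card]
  have e1 : Nat.card {a : {d : G.Dart // μ d = true} // a.1.fst = v}
      = (univ.filter fun d : G.Dart => d.fst = v ∧ μ d).card := by
    rw [Nat.card_congr (Equiv.subtypeSubtypeEquivSubtypeInter
      (fun d : G.Dart => μ d = true) (fun d : G.Dart => d.fst = v))]
    rw [Nat.card_eq_fintype_card, Fintype.card_subtype]
    congr 1
    apply Finset.filter_congr
    intro d _
    constructor
    · rintro ⟨h1, h2⟩; exact ⟨h2, h1⟩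
    · rintro ⟨h1, h2⟩; exact ⟨h2, h1⟩
  have e2 : Nat.card {a : {d : G.Dart // μ d = false} // a.1.fst = v}
      = (univ.filter fun d : G.Dart => d.fst = v ∧ ¬ μ d).card := by
    rw [Nat.card_congr (Equiv.subtypeSubtypeEquivSubtypeInter
      (fun d : G.Dart => μ d = false) (fun d : G.Dart => d.fst = v))]
    rw [Nat.card_eq_fintype_card, Fintype.card_subtype]
    congr 1
    apply Finset.filter_congr
    intro d _
    constructor
    · rintro ⟨h1, h2⟩; exact ⟨h2, by simp [h1]⟩
    · rintro ⟨h1, h2⟩; exact ⟨by simpa using h2, h1⟩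
  rw [e1, e2, hμ v]

lemma nat_card_sigma_const {ι : Type*} [Finite ι] (f : ι → Type*) [∀ i, Finite (f i)] (K : ℕ)
    (h : ∀ i, Nat.card (f i) = K) : Nat.card (Σ i, f i) = Nat.card ι * K := by
  classical
  cases nonempty_fintype ι
  letI : ∀ i, Fintype (f i) := fun i => Fintype.ofFinite _
  rw [Nat.card_eq_fintype_card, Nat.card_eq_fintype_card, Fintype.card_sigma]
  have h2 : ∀ i : ι, Fintype.card (f i) = K := fun i => by
    rw [← Nat.card_eq_fintype_card, h]
  rw [Finset.sum_congr rfl (fun i _ => h2 i), Finset.sum_const, Finset.card_univ,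
    smul_eq_mul]
/-- number of darts at `v` whose edge lies in `H` equals the number of edges of `H` at `v` -/
lemma card_darts_edge_mem (H : Finset (Sym2 V)) (hH : H ⊆ G.edgeFinset) (v : V) :
    (univ.filter fun d : G.Dart => d.fst = v ∧ d.edge ∈ H).card
      = (H.filter fun e => v ∈ e).card := by
  apply Finset.card_bij (fun d _ => d.edge)
  · intro d hd
    simp only [mem_filter, mem_univ, true_and] at hd
    simp only [mem_filter]
    refine ⟨hd.2, ?_⟩
    rw [← hd.1]
    show d.fst ∈ Sym2.mk d.toProd.1 d.toProd.2
    exact Sym2.mem_mk_left _ _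
  · intro d₁ h₁ d₂ h₂ he
    simp only [mem_filter, mem_univ, true_and] at h₁ h₂
    rcases (SimpleGraph.dart_edge_eq_iff d₁ d₂).mp he with h | h
    · exact h
    · exfalso
      have : d₁.fst = d₂.snd := by rw [h]; rfl
      have h2 : d₂.snd = d₂.fst := by rw [← this, h₁.1, h₂.1]
      exact d₂.snd_ne_fst h2
  · intro e he
    simp only [mem_filter] at he
    obtain ⟨heH, hve⟩ := he
    obtain ⟨w, rfl⟩ := Sym2.mem_iff_exists.mp hve
    have hadj : G.Adj v w := by
      have := hH heH
      rwa [SimpleGraph.mem_edgeFinset, SimpleGraph.mem_edgeSet] at this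
    exact ⟨⟨(v, w), hadj⟩, by simp only [mem_filter, mem_univ, true_and]; exact heH, rfl⟩

lemma card_darts_fst (v : V) :
    (univ.filter fun d : G.Dart => d.fst = v).card = G.degree v :=
  G.dart_fst_fiber_card_eq_degree v

/-- out-darts at `v` correspond to out-arcs -/
lemma card_darts_out (D : Finset (V × V)) (hD : IsOrientation G D) (v : V) :
    (univ.filter fun d : G.Dart => d.fst = v ∧ d.toProd ∈ D).card
      = (D.filter fun p => p.1 = v).card := by
  apply Finset.card_bij (fun d _ => d.toProd)
  · intro d hd
    simp only [mem_filter, mem_univ, true_and] at hd ⊢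
    exact ⟨hd.2, hd.1⟩
  · intro d₁ h₁ d₂ h₂ he
    exact SimpleGraph.Dart.toProd_injective he
  · intro p hp
    simp only [mem_filter] at hp
    exact ⟨⟨p, hD.1 p hp.1⟩, by simp [hp.1, hp.2], rfl⟩

/-- in-darts at `v` correspond to in-arcs -/
lemma card_darts_in (D : Finset (V × V)) (hD : IsOrientation G D) (v : V) :
    (univ.filter fun d : G.Dart => d.fst = v ∧ ¬ d.toProd ∈ D).card
      = (D.filter fun p => p.2 = v).card := by
  apply Finset.card_bij (fun d _ => d.symm.toProd)
  · intro d hd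
    simp only [mem_filter, mem_univ, true_and] at hd ⊢
    constructor
    · have := (hD.2 d.snd d.fst d.adj.symm).mpr
      simp only [SimpleGraph.Dart.symm_toProd]
      apply by_contra
      intro hc
      exact hd.2 ((hD.2 d.fst d.snd d.adj).mpr (by simpa [Prod.swap] using hc))
    · simp [hd.1]
  · intro d₁ h₁ d₂ h₂ he
    have := SimpleGraph.Dart.toProd_injective he
    have h2 := congrArg SimpleGraph.Dart.symm this
    simpa using h2
  · intro p hp
    simp only [mem_filter] at hp
    have hadj : G.Adj p.1 p.2 := hD.1 p hp.1
    refine ⟨⟨(p.2, p.1), hadj.symm⟩, ?_, ?_⟩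
    · simp only [mem_filter, mem_univ, true_and]
      refine ⟨hp.2, ?_⟩
      intro hc
      have := (hD.2 p.2 p.1 hadj.symm).mp hc
      exact this (by simpa using hp.1)
    · ext <;> simp

def muH (H : Finset (Sym2 V)) : G.Dart → Bool := fun d => decide (d.edge ∈ H)
def muD (D : Finset (V × V)) : G.Dart → Bool := fun d => decide (d.toProd ∈ D)

lemma filter_split (p : G.Dart → Prop) [DecidablePred p] (v : V) :
    (univ.filter fun d : G.Dart => d.fst = v ∧ p d).card
      + (univ.filter fun d : G.Dart => d.fst = v ∧ ¬ p d).card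
      = (univ.filter fun d : G.Dart => d.fst = v).card := by
  rw [← Finset.filter_filter, ← Finset.filter_filter]
  exact Finset.card_filter_add_card_filter_not _

lemma bal_muH {H : Finset (Sym2 V)} (hH : IsHalfGraph G H)
    (heven : ∀ v : V, Even (G.degree v)) : Bal (muH (G := G) H) := by
  intro v
  have h1 : (univ.filter fun d : G.Dart => d.fst = v ∧ muH (G := G) H d).card
      = G.degree v / 2 := by
    have := card_darts_edge_mem H hH.1 v
    rw [← hH.2 v, ← this]
    apply Finset.card_bij (fun d _ => d)  -- same set, different pred formulation
    · intro d hd; simpa [muH] using hd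
    · intro a b _ _ h; exact h
    · intro d hd; exact ⟨d, by simpa [muH] using hd, rfl⟩
  have h2 := filter_split (fun d : G.Dart => muH (G := G) H d) v
  obtain ⟨k, hk⟩ := heven v
  rw [card_darts_fst v] at h2
  rw [h1]
  omega

lemma bal_muD {D : Finset (V × V)} (hD : IsEulerianOrientation G D) : Bal (muD (G := G) D) := by
  intro v
  have e1 : (univ.filter fun d : G.Dart => d.fst = v ∧ muD (G := G) D d).card
      = (univ.filter fun d : G.Dart => d.fst = v ∧ d.toProd ∈ D).card := by
    apply Finset.card_bij (fun d _ => d)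
    · intro d hd; simpa [muD] using hd
    · intro a b _ _ h; exact h
    · intro d hd; exact ⟨d, by simpa [muD] using hd, rfl⟩
  have e2 : (univ.filter fun d : G.Dart => d.fst = v ∧ ¬ muD (G := G) D d).card
      = (univ.filter fun d : G.Dart => d.fst = v ∧ ¬ d.toProd ∈ D).card := by
    apply Finset.card_bij (fun d _ => d)
    · intro d hd; simpa [muD] using hd
    · intro a b _ _ h; exact h
    · intro d hd; exact ⟨d, by simpa [muD] using hd, rfl⟩
  rw [e1, e2, card_darts_out D hD.1 v, card_darts_in D hD.1 v, hD.2 v]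

/-- a pairing compatible with the marking of `H` forces `H` to be a half-graph -/
lemma halfgraph_of_compat {H : Finset (Sym2 V)} (hH : H ⊆ G.edgeFinset)
    {P : Pairing G} (hP : Compat (muH (G := G) H) P) : IsHalfGraph G H := by
  refine ⟨hH, fun v => ?_⟩
  -- the pairing restricted to darts at v bijects marked and unmarked darts
  have hbij : (univ.filter fun d : G.Dart => d.fst = v ∧ muH (G := G) H d).card
      = (univ.filter fun d : G.Dart => d.fst = v ∧ ¬ muH (G := G) H d).card := by
    apply Finset.card_bij (fun d _ => P.1 d)
    · intro d hd
      simp only [mem_filter, mem_univ, true_and] at hd ⊢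
      refine ⟨by rw [P.2.2.1, hd.1], ?_⟩
      rw [hP d, hd.2]
      simp
    · intro a b ha hb h
      have := congrArg P.1 h
      rwa [P.2.1, P.2.1] at this
    · intro d hd
      simp only [mem_filter, mem_univ, true_and] at hd
      refine ⟨P.1 d, ?_, (P.2.1 d)⟩
      simp only [mem_filter, mem_univ, true_and]
      refine ⟨by rw [P.2.2.1, hd.1], ?_⟩
      rw [hP d]
      simp [hd.2]
  have hsplit := filter_split (fun d : G.Dart => muH (G := G) H d) v
  rw [card_darts_fst v] at hsplit
  have h1 : (univ.filter fun d : G.Dart => d.fst = v ∧ muH (G := G) H d).card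
      = (H.filter fun e => v ∈ e).card := by
    rw [← card_darts_edge_mem H hH v]
    apply Finset.card_bij (fun d _ => d)
    · intro d hd; simpa [muH] using hd
    · intro a b _ _ h; exact h
    · intro d hd; exact ⟨d, by simpa [muH] using hd, rfl⟩
  omega

lemma eulerian_of_compat {D : Finset (V × V)} (hD : IsOrientation G D)
    {P : Pairing G} (hP : Compat (muD (G := G) D) P) : IsEulerianOrientation G D := by
  refine ⟨hD, fun v => ?_⟩
  have hbij : (univ.filter fun d : G.Dart => d.fst = v ∧ muD (G := G) D d).card
      = (univ.filter fun d : G.Dart => d.fst = v ∧ ¬ muD (G := G) D d).card := by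
    apply Finset.card_bij (fun d _ => P.1 d)
    · intro d hd
      simp only [mem_filter, mem_univ, true_and] at hd ⊢
      refine ⟨by rw [P.2.2.1, hd.1], ?_⟩
      rw [hP d, hd.2]
      simp
    · intro a b ha hb h
      have := congrArg P.1 h
      rwa [P.2.1, P.2.1] at this
    · intro d hd
      simp only [mem_filter, mem_univ, true_and] at hd
      refine ⟨P.1 d, ?_, (P.2.1 d)⟩
      simp only [mem_filter, mem_univ, true_and]
      refine ⟨by rw [P.2.2.1, hd.1], ?_⟩
      rw [hP d]
      simp [hd.2]
  have e1 : (univ.filter fun d : G.Dart => d.fst = v ∧ muD (G := G) D d).card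
      = (univ.filter fun d : G.Dart => d.fst = v ∧ d.toProd ∈ D).card := by
    apply Finset.card_bij (fun d _ => d)
    · intro d hd; simpa [muD] using hd
    · intro a b _ _ h; exact h
    · intro d hd; exact ⟨d, by simpa [muD] using hd, rfl⟩
  have e2 : (univ.filter fun d : G.Dart => d.fst = v ∧ ¬ muD (G := G) D d).card
      = (univ.filter fun d : G.Dart => d.fst = v ∧ ¬ d.toProd ∈ D).card := by
    apply Finset.card_bij (fun d _ => d)
    · intro d hd; simpa [muD] using hd
    · intro a b _ _ h; exact h
    · intro d hd; exact ⟨d, by simpa [muD] using hd, rfl⟩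
  rw [← card_darts_out D hD v, ← card_darts_in D hD v, ← e1, ← e2, hbij]

def bf : Bool → ZMod 2 := fun t => if t then 1 else 0

lemma bf_not_add (t : Bool) : bf (!t) + bf t = 1 := by cases t <;> decide

lemma halfsum_eq {α : Type*} [Fintype α] [DecidableEq α] (σ : α → α)
    (hσ2 : ∀ a, σ (σ a) = a) (hσne : ∀ a, σ a ≠ a)
    (s : α → Bool) (hs : ∀ a, s (σ a) = !s a)
    (w : α → ZMod 2) (hw : ∀ a, w (σ a) = w a) :
    ∑ a, bf (s a) * w a = (((univ.filter fun a => w a = 1).card / 2 : ℕ) : ZMod 2) := by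
  classical
  have hval : ∀ a : ZMod 2, a = 0 ∨ a = 1 := by decide
  have step1 : ∑ a, bf (s a) * w a
      = ∑ a, (if (s a = true ∧ w a = 1) then (1 : ZMod 2) else 0) := by
    apply Finset.sum_congr rfl
    intro a _
    rcases hval (w a) with h | h <;> cases hsa : s a <;> simp [bf, h, hsa]
  rw [step1]
  have hTcard : (univ.filter fun a => s a = true ∧ w a = 1).card
      = (univ.filter fun a => w a = 1).card / 2 := by
    have hbij : (univ.filter fun a => s a = true ∧ w a = 1).card
        = (univ.filter fun a => ¬ s a = true ∧ w a = 1).card := by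
      apply Finset.card_bij (fun a _ => σ a)
      · intro a ha
        simp only [mem_filter, mem_univ, true_and] at ha ⊢
        refine ⟨by rw [hs a, ha.1]; simp, by rw [hw a]; exact ha.2⟩
      · intro a b ha hb h
        have := congrArg σ h; rwa [hσ2, hσ2] at this
      · intro a ha
        simp only [mem_filter, mem_univ, true_and] at ha
        refine ⟨σ a, ?_, hσ2 a⟩
        simp only [mem_filter, mem_univ, true_and]
        have h1 : s (σ a) = true := by
          rw [hs a]
          simp only [Bool.not_eq_true] at ha ⊢
          simp [ha.1]
        exact ⟨by simp [h1], by rw [hw a]; exact ha.2⟩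
    have hsplit : (univ.filter fun a => s a = true ∧ w a = 1).card
        + (univ.filter fun a => ¬ s a = true ∧ w a = 1).card
        = (univ.filter fun a => w a = 1).card := by
      have e1 : ∀ (p : α → Prop) [DecidablePred p],
          (univ.filter fun a => p a ∧ w a = 1) = ((univ.filter fun a => w a = 1).filter p) := by
        intro p _
        rw [Finset.filter_filter]
        apply Finset.filter_congr
        intro a _
        tauto
      rw [e1, e1]
      exact Finset.card_filter_add_card_filter_not _
    omega
  rw [Finset.sum_boole, hTcard]

set_option maxHeartbeats 1000000 in
lemma key_exists (P : Pairing G) :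
    ∃ D : Finset (V × V), IsOrientation G D ∧
      ∀ d : G.Dart, ((P.1 d).toProd ∈ D ↔ d.toProd ∉ D) := by
  classical
  obtain ⟨ev⟩ : Nonempty (V ≃ Fin (Fintype.card V)) := ⟨Fintype.equivFin V⟩
  set r : G.Dart → Bool := fun d => decide (ev d.fst < ev d.snd) with hr_def
  have hr : ∀ d : G.Dart, r d.symm = !r d := by
    intro d
    have hne : ev d.fst ≠ ev d.snd := fun h => d.fst_ne_snd (ev.injective h)
    by_cases h : ev d.fst < ev d.snd
    · have h' : ¬ ev d.snd < ev d.fst := asymm h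
      simp [r, SimpleGraph.Dart.symm, h, h']
    · have hlt : ev d.snd < ev d.fst := lt_of_le_of_ne (not_lt.mp h) (Ne.symm hne)
      simp [r, SimpleGraph.Dart.symm, hlt, h]
  set rP : G.Dart → Bool := fun d => decide (ev d.snd < ev (P.1 d).snd) with hrP_def
  have hsnd_ne : ∀ d : G.Dart, (P.1 d).snd ≠ d.snd := by
    intro d h
    apply P.2.2.2 d
    apply SimpleGraph.Dart.ext
    exact Prod.ext (P.2.2.1 d) h
  have hrP : ∀ d : G.Dart, rP (P.1 d) = !rP d := by
    intro d
    have hne : ev d.snd ≠ ev (P.1 d).snd := fun h => hsnd_ne d (ev.injective h.symm)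
    by_cases h : ev d.snd < ev (P.1 d).snd
    · have h' : ¬ ev (P.1 d).snd < ev ((P.1 (P.1 d))).snd := by
        rw [P.2.1 d]; exact asymm h
      simp only [rP]
      simp [h, h']
    · have hlt : ev (P.1 d).snd < ev d.snd := lt_of_le_of_ne (not_lt.mp h) (Ne.symm hne)
      simp only [rP]
      rw [P.2.1 d]
      simp [hlt, h]
  -- the linear system
  set M : (Sym2 V → ZMod 2) →ₗ[ZMod 2] (G.Dart → ZMod 2) :=
    { toFun := fun x d => x d.edge + x (P.1 d).edge
      map_add' := by intro x y; funext d; simp [Pi.add_apply]; ring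
      map_smul' := by intro c x; funext d; simp [Pi.smul_apply, smul_eq_mul]; ring } with hM_def
  set b : G.Dart → ZMod 2 := fun d => 1 + bf (r d) + bf (r (P.1 d)) with hb_def
  have hsum_reindex : ∀ F : G.Dart → ZMod 2, ∑ d, F (P.1 d) = ∑ d, F d := by
    intro F
    apply Fintype.sum_bijective P.1
    · exact Function.Involutive.bijective P.2.1
    · intro d; rfl
  have hbrange : b ∈ LinearMap.range M := by
    by_contra hb
    obtain ⟨f, hfb, hmap⟩ := Submodule.exists_dual_map_eq_bot_of_notMem hb inferInstance
    have hf0 : ∀ x, f (M x) = 0 := by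
      intro x
      have : f (M x) ∈ (LinearMap.range M).map f := ⟨M x, ⟨x, rfl⟩, rfl⟩
      rw [hmap] at this
      exact (Submodule.mem_bot (ZMod 2)).mp this
    set z : G.Dart → ZMod 2 := fun d => f (fun j => if d = j then 1 else 0) with hz_def
    have hfsum : ∀ u : G.Dart → ZMod 2, f u = ∑ d, u d * z d := by
      intro u
      rw [LinearMap.pi_apply_eq_sum_univ f u]
      apply Finset.sum_congr rfl
      intro d _
      rw [smul_eq_mul]
    set w : G.Dart → ZMod 2 := fun d => z d + z (P.1 d) with hw_def
    have hwP : ∀ d, w (P.1 d) = w d := by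
      intro d
      simp only [w, P.2.1 d]
      ring
    have hadd_eq : ∀ a c : ZMod 2, a + c = 0 → c = a := by decide
    have hwsymm : ∀ d₀ : G.Dart, w d₀.symm = w d₀ := by
      intro d₀
      have h0 := hf0 (fun e => if e = d₀.edge then (1 : ZMod 2) else 0)
      rw [hfsum] at h0
      have hMx : ∀ d : G.Dart,
          (M (fun e => if e = d₀.edge then (1 : ZMod 2) else 0)) d
          = (if d.edge = d₀.edge then (1 : ZMod 2) else 0)
            + (if (P.1 d).edge = d₀.edge then (1 : ZMod 2) else 0) := fun d => rfl
      have h1 : ∑ d, ((if d.edge = d₀.edge then (1 : ZMod 2) else 0)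
            + (if (P.1 d).edge = d₀.edge then (1 : ZMod 2) else 0)) * z d = 0 :=
        (Finset.sum_congr rfl fun d _ => by rw [hMx d]).symm.trans h0
      have h2 : ∑ d, (if (P.1 d).edge = d₀.edge then (1 : ZMod 2) else 0) * z d
          = ∑ d, (if d.edge = d₀.edge then (1 : ZMod 2) else 0) * z (P.1 d) := by
        rw [← hsum_reindex (fun d => (if d.edge = d₀.edge then (1 : ZMod 2) else 0) * z (P.1 d))]
        apply Finset.sum_congr rfl
        intro d _
        rw [P.2.1 d]
      have h3 : ∑ d, (if d.edge = d₀.edge then (1 : ZMod 2) else 0) * w d = 0 := by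
        calc ∑ d, (if d.edge = d₀.edge then (1 : ZMod 2) else 0) * w d
            = ∑ d, ((if d.edge = d₀.edge then (1 : ZMod 2) else 0) * z d
              + (if d.edge = d₀.edge then (1 : ZMod 2) else 0) * z (P.1 d)) := by
              apply Finset.sum_congr rfl; intro d _; simp only [w]; ring
          _ = ∑ d, (if d.edge = d₀.edge then (1 : ZMod 2) else 0) * z d
              + ∑ d, (if d.edge = d₀.edge then (1 : ZMod 2) else 0) * z (P.1 d) :=
              Finset.sum_add_distrib
          _ = ∑ d, (if d.edge = d₀.edge then (1 : ZMod 2) else 0) * z d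
              + ∑ d, (if (P.1 d).edge = d₀.edge then (1 : ZMod 2) else 0) * z d := by rw [h2]
          _ = ∑ d, ((if d.edge = d₀.edge then (1 : ZMod 2) else 0)
              + (if (P.1 d).edge = d₀.edge then (1 : ZMod 2) else 0)) * z d := by
              rw [← Finset.sum_add_distrib]
              apply Finset.sum_congr rfl
              intro d _
              ring
          _ = 0 := h1
      have h4 : ∑ d, (if d.edge = d₀.edge then (1 : ZMod 2) else 0) * w d
          = ∑ d ∈ univ.filter (fun d : G.Dart => d.edge = d₀.edge), w d := by
        rw [Finset.sum_filter]
        apply Finset.sum_congr rfl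
        intro d _
        by_cases h : d.edge = d₀.edge <;> simp [h]
      have h5 : (univ.filter fun d : G.Dart => d.edge = d₀.edge) = {d₀, d₀.symm} :=
        SimpleGraph.Dart.edge_fiber d₀
      rw [h4, h5, Finset.sum_pair (SimpleGraph.Dart.symm_ne d₀).symm] at h3
      exact hadd_eq _ _ h3
    -- now compute f b
    have hfb0 : f b = 0 := by
      rw [hfsum]
      have e1 : ∑ d, b d * z d
          = ∑ d, z d + (∑ d, bf (r d) * z d + ∑ d, bf (r (P.1 d)) * z d) := by
        rw [← Finset.sum_add_distrib, ← Finset.sum_add_distrib]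
        apply Finset.sum_congr rfl
        intro d _
        simp only [b]
        ring
      have e2 : ∑ d, bf (r (P.1 d)) * z d = ∑ d, bf (r d) * z (P.1 d) := by
        rw [← hsum_reindex (fun d => bf (r d) * z (P.1 d))]
        apply Finset.sum_congr rfl
        intro d _
        rw [P.2.1 d]
      have e3 : ∑ d, bf (r d) * z d + ∑ d, bf (r d) * z (P.1 d)
          = ∑ d, bf (r d) * w d := by
        rw [← Finset.sum_add_distrib]
        apply Finset.sum_congr rfl
        intro d _
        simp only [w]
        ring
      have e4 : ∑ d, z d = ∑ d, bf (rP d) * w d := by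
        have e41 : ∑ d, bf (rP d) * w d
            = ∑ d, bf (rP d) * z d + ∑ d, bf (rP d) * z (P.1 d) := by
          rw [← Finset.sum_add_distrib]
          apply Finset.sum_congr rfl
          intro d _
          simp only [w]
          ring
        have e42 : ∑ d, bf (rP d) * z (P.1 d) = ∑ d, bf (rP (P.1 d)) * z d := by
          rw [← hsum_reindex (fun d => bf (rP (P.1 d)) * z d)]
          apply Finset.sum_congr rfl
          intro d _
          rw [P.2.1 d]
        rw [e41, e42, ← Finset.sum_add_distrib]
        apply Finset.sum_congr rfl
        intro d _
        rw [hrP d]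
        have : bf (rP d) + bf (!rP d) = 1 := by rw [add_comm]; exact bf_not_add _
        calc z d = 1 * z d := by ring
        _ = (bf (rP d) + bf (!rP d)) * z d := by rw [this]
        _ = bf (rP d) * z d + bf (!rP d) * z d := by ring
      have e5 := halfsum_eq (fun d : G.Dart => d.symm) SimpleGraph.Dart.symm_symm
        SimpleGraph.Dart.symm_ne r hr w hwsymm
      have e6 := halfsum_eq P.1 P.2.1 P.2.2.2 rP hrP w hwP
      rw [e1, e2, e3, e4, e5, e6]
      exact CharTwo.add_self_eq_zero _
    exact hfb hfb0
  obtain ⟨x, hx⟩ := hbrange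
  -- construct the orientation
  set D : Finset (V × V) := @Finset.filter _
      (fun p => ∃ h : G.Adj p.1 p.2, x (SimpleGraph.Dart.edge ⟨p, h⟩)
        + bf (r ⟨p, h⟩) = 1) (Classical.decPred _) univ with hD_def
  have hmem : ∀ d : G.Dart, (d.toProd ∈ D ↔ x d.edge + bf (r d) = 1) := by
    intro d
    simp only [D, Finset.mem_filter, Finset.mem_univ, true_and]
    constructor
    · rintro ⟨h, hq⟩
      rwa [show (⟨d.toProd, h⟩ : G.Dart) = d from SimpleGraph.Dart.ext _ _ rfl] at hq
    · intro hq
      exact ⟨d.adj, by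
        rwa [show (⟨d.toProd, d.adj⟩ : G.Dart) = d from SimpleGraph.Dart.ext _ _ rfl]⟩
  have hflip : ∀ a : ZMod 2, ∀ t : Bool, (a + bf t = 1 ↔ ¬(a + bf (!t) = 1)) := by decide
  refine ⟨D, ⟨?_, ?_⟩, ?_⟩
  · intro p hp
    simp only [D, Finset.mem_filter] at hp
    exact hp.2.choose
  · intro u v huv
    have h1 := hmem ⟨(u, v), huv⟩
    have h2 := hmem ⟨(v, u), huv.symm⟩
    have hsy : (⟨(v, u), huv.symm⟩ : G.Dart) = SimpleGraph.Dart.symm ⟨(u, v), huv⟩ :=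
      SimpleGraph.Dart.ext _ _ rfl
    simp only [hsy] at h2
    rw [SimpleGraph.Dart.edge_symm, hr] at h2
    show ((⟨(u,v),huv⟩ : G.Dart).toProd ∈ D ↔ ¬ ((⟨(v,u),huv.symm⟩ : G.Dart).toProd ∈ D))
    rw [h1, hsy, hmem, SimpleGraph.Dart.edge_symm, hr]
    exact hflip _ _
  · intro d
    have h1 := hmem d
    have h2 := hmem (P.1 d)
    have hbd : x d.edge + x (P.1 d).edge = b d := congrFun hx d
    rw [h1, h2]
    have key : (x (P.1 d).edge + bf (r (P.1 d))) + (x d.edge + bf (r d)) = 1 := by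
      have : x d.edge + x (P.1 d).edge + (bf (r d) + bf (r (P.1 d)))
          = b d + (bf (r d) + bf (r (P.1 d))) := by rw [hbd]
      calc (x (P.1 d).edge + bf (r (P.1 d))) + (x d.edge + bf (r d))
          = x d.edge + x (P.1 d).edge + (bf (r d) + bf (r (P.1 d))) := by ring
        _ = b d + (bf (r d) + bf (r (P.1 d))) := by rw [hbd]
        _ = 1 + (bf (r d) + bf (r (P.1 d))) + (bf (r d) + bf (r (P.1 d))) := by
              simp only [b]; ring
        _ = 1 + ((bf (r d) + bf (r (P.1 d))) + (bf (r d) + bf (r (P.1 d)))) := by ring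
        _ = 1 + 0 := by rw [CharTwo.add_self_eq_zero]
        _ = 1 := by ring
    have : ∀ A B : ZMod 2, A + B = 1 → (A = 1 ↔ ¬ B = 1) := by decide
    exact this _ _ key
lemma compat_iff_muH {H : Finset (Sym2 V)} {P : Pairing G} :
    Compat (muH (G := G) H) P ↔ ∀ d : G.Dart, ((P.1 d).edge ∈ H ↔ ¬ d.edge ∈ H) := by
  constructor
  · intro h d
    have := h d
    simp only [muH] at this
    by_cases h1 : d.edge ∈ H <;> by_cases h2 : (P.1 d).edge ∈ H <;>
      simp [h1, h2] at this ⊢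
  · intro h d
    have := h d
    simp only [muH]
    by_cases h1 : d.edge ∈ H <;> by_cases h2 : (P.1 d).edge ∈ H <;>
      simp [h1, h2] at this ⊢

lemma compat_iff_muD {D : Finset (V × V)} {P : Pairing G} :
    Compat (muD (G := G) D) P ↔ ∀ d : G.Dart, ((P.1 d).toProd ∈ D ↔ ¬ d.toProd ∈ D) := by
  constructor
  · intro h d
    have := h d
    simp only [muD] at this
    by_cases h1 : d.toProd ∈ D <;> by_cases h2 : (P.1 d).toProd ∈ D <;>
      simp [h1, h2] at this ⊢
  · intro h d
    have := h d
    simp only [muD]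
    by_cases h1 : d.toProd ∈ D <;> by_cases h2 : (P.1 d).toProd ∈ D <;>
      simp [h1, h2] at this ⊢

/-- for an orientation, the reversed dart is in `D` iff the dart is not -/
lemma orient_symm_mem {D : Finset (V × V)} (hD : IsOrientation G D) (d : G.Dart) :
    d.symm.toProd ∈ D ↔ ¬ d.toProd ∈ D := by
  have h := hD.2 d.snd d.fst d.adj.symm
  have h2 := hD.2 d.fst d.snd d.adj
  constructor
  · intro h1 h3
    exact (h2.mp (by exact h3)) (by exact h1)
  · intro h1
    by_contra h3
    exact h1 (h2.mpr (by exact h3))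

noncomputable def y0 (P : Pairing G) : Finset (Sym2 V) :=
  @dite _ (∃ y : Finset (Sym2 V), y ⊆ G.edgeFinset ∧ Compat (muH (G := G) y) P)
    (Classical.dec _) (fun h => h.choose) (fun _ => ∅)

lemma y0_spec {P : Pairing G}
    (h : ∃ y : Finset (Sym2 V), y ⊆ G.edgeFinset ∧ Compat (muH (G := G) y) P) :
    (y0 P) ⊆ G.edgeFinset ∧ Compat (muH (G := G) (y0 P)) P := by
  rw [y0, dif_pos h]
  exact h.choose_spec

noncomputable def x0 (P : Pairing G) : Finset (V × V) := (key_exists P).choose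

lemma x0_spec (P : Pairing G) : IsOrientation G (x0 P) ∧
    ∀ d : G.Dart, ((P.1 d).toProd ∈ x0 P ↔ d.toProd ∉ x0 P) := (key_exists P).choose_spec

def twist (G : SimpleGraph V) [DecidableRel G.Adj]
    (D₀ : Finset (V × V)) (F : Finset (Sym2 V)) : Finset (V × V) :=
  univ.filter (fun p => G.Adj p.1 p.2 ∧
    ((s(p.1, p.2) ∈ F ∧ (p.2, p.1) ∈ D₀) ∨ (¬ s(p.1, p.2) ∈ F ∧ p ∈ D₀)))

lemma twist_mem {D₀ : Finset (V × V)} {F : Finset (Sym2 V)} (d : G.Dart) :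
    d.toProd ∈ twist G D₀ F
      ↔ (if d.edge ∈ F then d.symm.toProd ∈ D₀ else d.toProd ∈ D₀) := by
  rw [twist, Finset.mem_filter]
  have he : s(d.toProd.1, d.toProd.2) = d.edge := by
    show s(d.toProd.1, d.toProd.2) = s(d.fst, d.snd)
    rfl
  have hsw : (d.toProd.2, d.toProd.1) = d.symm.toProd := rfl
  rw [he, hsw]
  by_cases hF : d.edge ∈ F <;> simp [hF, d.adj]

lemma twist_orientation {D₀ : Finset (V × V)} (hD₀ : IsOrientation G D₀)
    (F : Finset (Sym2 V)) : IsOrientation G (twist G D₀ F) := by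
  constructor
  · intro p hp
    rw [twist, Finset.mem_filter] at hp
    exact hp.2.1
  · intro u v huv
    set d : G.Dart := ⟨(u, v), huv⟩ with hd
    have h1 := twist_mem (D₀ := D₀) (F := F) d
    have h2 := twist_mem (D₀ := D₀) (F := F) d.symm
    have hde : d.symm.edge = d.edge := SimpleGraph.Dart.edge_symm d
    have hdd : d.symm.symm = d := SimpleGraph.Dart.symm_symm d
    rw [hde, hdd] at h2
    show d.toProd ∈ twist G D₀ F ↔ ¬ d.symm.toProd ∈ twist G D₀ F
    rw [h1, h2]
    have horient := orient_symm_mem hD₀ d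
    by_cases hF : d.edge ∈ F <;> simp [hF] <;> tauto

set_option maxHeartbeats 1000000 in
lemma twist_compat {P : Pairing G} {y yy : Finset (Sym2 V)}
    (hy : Compat (muH (G := G) y) P) (hyy : Compat (muH (G := G) yy) P) :
    Compat (muD (G := G) (twist G (x0 P) (symmDiff y yy))) P := by
  rw [compat_iff_muD]
  intro d
  obtain ⟨hx0o, hx0p⟩ := x0_spec P
  rw [compat_iff_muH] at hy hyy
  have hF : (P.1 d).edge ∈ symmDiff y yy ↔ d.edge ∈ symmDiff y yy := by
    rw [Finset.mem_symmDiff, Finset.mem_symmDiff]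
    have ha := hy d
    have hb := hyy d
    tauto
  have h1 := twist_mem (D₀ := x0 P) (F := symmDiff y yy) d
  have h2 := twist_mem (D₀ := x0 P) (F := symmDiff y yy) (P.1 d)
  rw [h1, h2]
  have hpair := hx0p d
  have hs1 := orient_symm_mem hx0o d
  have hs2 := orient_symm_mem hx0o (P.1 d)
  by_cases hFd : d.edge ∈ symmDiff y yy
  · have hFP : (P.1 d).edge ∈ symmDiff y yy := hF.mpr hFd
    simp only [if_pos hFd, if_pos hFP]
    tauto
  · have hFP : ¬ (P.1 d).edge ∈ symmDiff y yy := fun h => hFd (hF.mp h)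
    simp only [if_neg hFd, if_neg hFP]
    tauto

lemma twist_inj {D₀ : Finset (V × V)} (hD₀ : IsOrientation G D₀)
    {F F' : Finset (Sym2 V)} (hF : F ⊆ G.edgeFinset) (hF' : F' ⊆ G.edgeFinset)
    (h : twist G D₀ F = twist G D₀ F') : F = F' := by
  ext e
  by_cases he : e ∈ G.edgeFinset
  case neg => constructor <;> intro hh <;> [exact absurd (hF hh) he; exact absurd (hF' hh) he]
  induction e with
  | _ u v =>
    have huv : G.Adj u v := by rwa [SimpleGraph.mem_edgeFinset, SimpleGraph.mem_edgeSet] at he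
    set d : G.Dart := ⟨(u, v), huv⟩ with hd
    have h1 := twist_mem (D₀ := D₀) (F := F) d
    have h2 := twist_mem (D₀ := D₀) (F := F') d
    rw [h] at h1
    have heq := h1.symm.trans h2  -- if..F.. ↔ if..F'..
    have horient := orient_symm_mem hD₀ d
    have hedge : d.edge = s(u, v) := rfl
    rw [hedge] at heq
    by_cases hmF : s(u, v) ∈ F <;> by_cases hmF' : s(u, v) ∈ F' <;>
      simp only [if_pos, if_neg, hmF, hmF'] at heq ⊢ <;> tauto

attribute [irreducible] twist x0 y0

end Stmt18Aux

set_option maxHeartbeats 1000000 in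
open Stmt18Aux in
theorem stmt18 {V : Type*} [Fintype V] [DecidableEq V] (G : SimpleGraph V)
    [DecidableRel G.Adj] (heven : ∀ v : V, Even (G.degree v)) :
    {H : Finset (Sym2 V) | IsHalfGraph G H}.ncard ≤
      {D : Finset (V × V) | IsEulerianOrientation G D}.ncard := by
  classical
  by_cases h0 : ∃ H₀ : Finset (Sym2 V), IsHalfGraph G H₀
  case neg =>
    have hempty : {H : Finset (Sym2 V) | IsHalfGraph G H} = ∅ := by
      ext H
      simp only [Set.mem_setOf_eq, Set.mem_empty_iff_false, iff_false]
      exact fun h => h0 ⟨H, h⟩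
    rw [hempty, Set.ncard_empty]
    exact Nat.zero_le _
  obtain ⟨H₀, hH₀⟩ := h0
  set K := Nat.card {P : Pairing G // Compat (muH (G := G) H₀) P} with hK
  have hfibH : ∀ H : {H : Finset (Sym2 V) // IsHalfGraph G H},
      Nat.card {P : Pairing G // Compat (muH (G := G) H.1) P} = K :=
    fun H => card_compat_congr (exists_dart_equiv (bal_muH H.2 heven) (bal_muH hH₀ heven))
  have hfibD : ∀ D : {D : Finset (V × V) // IsEulerianOrientation G D},
      Nat.card {P : Pairing G // Compat (muD (G := G) D.1) P} = K :=
    fun D => card_compat_congr (exists_dart_equiv (bal_muD D.2) (bal_muH hH₀ heven))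
  have hKpos : 0 < K := by
    obtain ⟨P, hP⟩ := compat_nonempty (bal_psi (bal_muH hH₀ heven))
    rw [hK]
    have : Nonempty {P : Pairing G // Compat (muH (G := G) H₀) P} := ⟨⟨P, hP⟩⟩
    exact Nat.card_pos
  have hA : Nat.card (Σ H : {H : Finset (Sym2 V) // IsHalfGraph G H},
        {P : Pairing G // Compat (muH (G := G) H.1) P})
      = Nat.card {H : Finset (Sym2 V) // IsHalfGraph G H} * K :=
    nat_card_sigma_const _ K hfibH
  have hB : Nat.card (Σ D : {D : Finset (V × V) // IsEulerianOrientation G D},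
        {P : Pairing G // Compat (muD (G := G) D.1) P})
      = Nat.card {D : Finset (V × V) // IsEulerianOrientation G D} * K :=
    nat_card_sigma_const _ K hfibD
  -- the injection
  have hle : Nat.card (Σ H : {H : Finset (Sym2 V) // IsHalfGraph G H},
        {P : Pairing G // Compat (muH (G := G) H.1) P})
      ≤ Nat.card (Σ D : {D : Finset (V × V) // IsEulerianOrientation G D},
        {P : Pairing G // Compat (muD (G := G) D.1) P}) := by
    have hcompatD : ∀ (q : Σ H : {H : Finset (Sym2 V) // IsHalfGraph G H},
        {P : Pairing G // Compat (muH (G := G) H.1) P}),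
        Compat (muD (G := G) (twist G (x0 q.2.1) (symmDiff q.1.1 (y0 q.2.1)))) q.2.1 :=
      fun q => twist_compat q.2.2 (y0_spec ⟨q.1.1, q.1.2.1, q.2.2⟩).2
    apply Nat.card_le_card_of_injective
      (f := fun q => (⟨⟨twist G (x0 q.2.1) (symmDiff q.1.1 (y0 q.2.1)),
        eulerian_of_compat (twist_orientation (x0_spec q.2.1).1 _) (hcompatD q)⟩,
        ⟨q.2.1, hcompatD q⟩⟩ : Σ D : {D : Finset (V × V) // IsEulerianOrientation G D},
        {P : Pairing G // Compat (muD (G := G) D.1) P}))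
    intro a b hab
    obtain ⟨⟨Ha, hHa⟩, ⟨Pa, hPa⟩⟩ := a
    obtain ⟨⟨Hb, hHb⟩, ⟨Pb, hPb⟩⟩ := b
    have hP : Pa = Pb := congrArg (fun q : (Σ D : {D : Finset (V × V) //
        IsEulerianOrientation G D}, {P : Pairing G // Compat (muD (G := G) D.1) P}) => q.2.1) hab
    have hD : twist G (x0 Pa) (symmDiff Ha (y0 Pa)) = twist G (x0 Pb) (symmDiff Hb (y0 Pb)) :=
      congrArg (fun q : (Σ D : {D : Finset (V × V) //
        IsEulerianOrientation G D}, {P : Pairing G // Compat (muD (G := G) D.1) P}) => q.1.1) hab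
    subst hP
    have hsub : ∀ {y : Finset (Sym2 V)}, y ⊆ G.edgeFinset →
        ∀ {y' : Finset (Sym2 V)}, y' ⊆ G.edgeFinset → symmDiff y y' ⊆ G.edgeFinset := by
      intro y hy y' hy' e he
      rw [Finset.mem_symmDiff] at he
      rcases he with ⟨h1, _⟩ | ⟨h1, _⟩
      · exact hy h1
      · exact hy' h1
    have hy0sub : y0 Pa ⊆ G.edgeFinset := (y0_spec ⟨Ha, hHa.1, hPa⟩).1
    have hFeq : symmDiff Ha (y0 Pa) = symmDiff Hb (y0 Pa) :=
      twist_inj (x0_spec Pa).1 (hsub hHa.1 hy0sub) (hsub hHb.1 hy0sub) hD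
    have hH : Ha = Hb := by
      have h1 : symmDiff (symmDiff Ha (y0 Pa)) (y0 Pa)
          = symmDiff (symmDiff Hb (y0 Pa)) (y0 Pa) := by rw [hFeq]
      rwa [symmDiff_symmDiff_cancel_right, symmDiff_symmDiff_cancel_right] at h1
    subst hH
    rfl
  -- wrap up
  have hcard1 : {H : Finset (Sym2 V) | IsHalfGraph G H}.ncard
      = Nat.card {H : Finset (Sym2 V) // IsHalfGraph G H} := by
    rw [← Nat.card_coe_set_eq]
    exact Nat.card_congr (Equiv.subtypeEquivRight fun H => Iff.rfl)
  have hcard2 : {D : Finset (V × V) | IsEulerianOrientation G D}.ncard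
      = Nat.card {D : Finset (V × V) // IsEulerianOrientation G D} := by
    rw [← Nat.card_coe_set_eq]
    exact Nat.card_congr (Equiv.subtypeEquivRight fun D => Iff.rfl)
  rw [hcard1, hcard2]
  have := hA ▸ hB ▸ hle
  exact Nat.le_of_mul_le_mul_right this hKpos
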